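/- Let G be a simple graph on n vertices with Sombor spectral radius ρ_1, Sombor energy E(G), and forgotten index F. Then 2ρ_1 ≤ E(G) ≤ ρ_1 + √((n−1)(2F − ρ_1²)). -/

import Mathlib

open scoped Classical

noncomputable def somborMatrix {V : Type*} [Fintype V] (G : SimpleGraph V) :
    Matrix V V ℝ := fun i j =>
  if G.Adj i j then Real.sqrt ((G.degree i : ℝ) ^ 2 + (G.degree j : ℝ) ^ 2) else 0

lemma somborMatrix_isHermitian {V : Type*} [Fintype V] (G : SimpleGraph V) :
    (somborMatrix G).IsHermitian := by
  apply Matrix.ext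
  intro i j
  simp only [Matrix.conjTranspose_apply, star_trivial, somborMatrix]
  rw [G.adj_comm, add_comm]

/-- The Sombor eigenvalues of `G`. -/
noncomputable def somborEigs {V : Type*} [Fintype V] (G : SimpleGraph V) : V → ℝ :=
  (somborMatrix_isHermitian G).eigenvalues

/-- The Sombor spectral radius (largest Sombor eigenvalue). -/
noncomputable def somborSpecRad {V : Type*} [Fintype V] (G : SimpleGraph V) : ℝ :=
  ⨆ i, somborEigs G i

/-- The Sombor energy. -/
noncomputable def somborEnergy {V : Type*} [Fintype V] (G : SimpleGraph V) : ℝ :=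
  ∑ i, |somborEigs G i|

/-- The Sombor Estrada index. -/
noncomputable def somborEstrada {V : Type*} [Fintype V] (G : SimpleGraph V) : ℝ :=
  ∑ i, Real.exp (somborEigs G i)

/-- The forgotten topological index `F = ∑ d_i ^ 3`. -/
noncomputable def forgottenIndex {V : Type*} [Fintype V] (G : SimpleGraph V) : ℝ :=
  ∑ i, (G.degree i : ℝ) ^ 3

lemma herm_trace_eq {V : Type*} [Fintype V] [DecidableEq V] {A : Matrix V V ℝ}
    (hA : A.IsHermitian) : A.trace = ∑ i, hA.eigenvalues i := by
  nth_rewrite 1 [hA.spectral_theorem]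
  rw [Unitary.conjStarAlgAut_apply]
  rw [Matrix.trace_mul_cycle]
  have hU : (star (hA.eigenvectorUnitary : Matrix V V ℝ)) *
      (hA.eigenvectorUnitary : Matrix V V ℝ) = 1 :=
    Matrix.mem_unitaryGroup_iff'.mp (hA.eigenvectorUnitary).2
  rw [hU, one_mul, Matrix.trace_diagonal]
  simp

lemma herm_trace_sq_eq {V : Type*} [Fintype V] [DecidableEq V] {A : Matrix V V ℝ}
    (hA : A.IsHermitian) : (A * A).trace = ∑ i, hA.eigenvalues i ^ 2 := by
  have h := hA.conjStarAlgAut_star_eigenvectorUnitary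
  rw [Unitary.conjStarAlgAut_star_apply] at h
  have hU : (hA.eigenvectorUnitary : Matrix V V ℝ) *
      (star (hA.eigenvectorUnitary : Matrix V V ℝ)) = 1 :=
    Matrix.mem_unitaryGroup_iff.mp (hA.eigenvectorUnitary).2
  set U := (hA.eigenvectorUnitary : Matrix V V ℝ)
  have h2 : Matrix.diagonal (RCLike.ofReal ∘ hA.eigenvalues) *
      Matrix.diagonal (RCLike.ofReal ∘ hA.eigenvalues) = star U * (A * A) * U := by
    rw [← h]
    calc (star U * A * U) * (star U * A * U)
        = star U * (A * ((U * star U) * (A * U))) := by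
          simp only [Matrix.mul_assoc]
      _ = star U * (A * A) * U := by rw [hU]; simp only [Matrix.one_mul, Matrix.mul_assoc]
  have := congrArg Matrix.trace h2
  rw [Matrix.trace_mul_cycle, ← Matrix.mul_assoc, hU, Matrix.one_mul] at this
  rw [← this, Matrix.diagonal_mul_diagonal, Matrix.trace_diagonal]
  simp [sq]

lemma sombor_trace {V : Type*} [Fintype V] (G : SimpleGraph V) :
    (somborMatrix G).trace = 0 := by
  simp [Matrix.trace, Matrix.diag, somborMatrix]

lemma degree_sum_ite {V : Type*} [Fintype V] (G : SimpleGraph V) (i : V) :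
    ∑ j, (if G.Adj i j then (1:ℝ) else 0) = (G.degree i : ℝ) := by
  rw [Finset.sum_boole]
  congr 1
  rw [SimpleGraph.degree]
  congr 1
  ext j
  simp [SimpleGraph.mem_neighborFinset]

lemma sombor_trace_sq {V : Type*} [Fintype V] (G : SimpleGraph V) :
    (somborMatrix G * somborMatrix G).trace = 2 * forgottenIndex G := by
  have key : ∀ i j, somborMatrix G i j * somborMatrix G j i =
      (if G.Adj i j then ((G.degree i : ℝ) ^ 2) else 0)
      + (if G.Adj i j then ((G.degree j : ℝ) ^ 2) else 0) := by
    intro i j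
    simp only [somborMatrix]
    by_cases h : G.Adj i j
    · rw [if_pos h, if_pos h, if_pos h, if_pos (G.adj_comm i j |>.mp h),
        add_comm ((G.degree j:ℝ)^2)]
      exact Real.mul_self_sqrt (by positivity)
    · simp [h]
  have diag1 : ∀ i : V, ∑ j, (if G.Adj i j then ((G.degree i : ℝ) ^ 2) else 0)
      = (G.degree i : ℝ) ^ 3 := by
    intro i
    have : ∑ j, (if G.Adj i j then ((G.degree i : ℝ) ^ 2) else 0)
        = ((G.degree i : ℝ) ^ 2) * ∑ j, (if G.Adj i j then (1:ℝ) else 0) := by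
      rw [Finset.mul_sum]; congr 1; ext j; split <;> simp
    rw [this, degree_sum_ite]; ring
  simp only [Matrix.trace, Matrix.diag, Matrix.mul_apply]
  calc ∑ i, ∑ j, somborMatrix G i j * somborMatrix G j i
      = ∑ i, ∑ j, ((if G.Adj i j then ((G.degree i : ℝ) ^ 2) else 0)
        + (if G.Adj i j then ((G.degree j : ℝ) ^ 2) else 0)) := by
        simp_rw [key]
    _ = (∑ i, ∑ j, (if G.Adj i j then ((G.degree i : ℝ) ^ 2) else 0))
        + ∑ i, ∑ j, (if G.Adj i j then ((G.degree j : ℝ) ^ 2) else 0) := by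
        rw [← Finset.sum_add_distrib]; congr 1; ext i; rw [← Finset.sum_add_distrib]
    _ = forgottenIndex G + forgottenIndex G := by
        congr 1
        · simp_rw [diag1]; rfl
        · rw [Finset.sum_comm]
          have : ∀ j : V, ∑ i, (if G.Adj i j then ((G.degree j : ℝ) ^ 2) else 0)
              = (G.degree j : ℝ) ^ 3 := by
            intro j
            rw [← diag1 j]
            congr 1; ext i; rw [G.adj_comm]
          simp_rw [this]; rfl
    _ = 2 * forgottenIndex G := by ring

theorem stmt14 {n : ℕ} (G : SimpleGraph (Fin n)) :
    2 * somborSpecRad G ≤ somborEnergy G ∧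
    somborEnergy G ≤ somborSpecRad G +
      Real.sqrt (((n : ℝ) - 1) * (2 * forgottenIndex G - (somborSpecRad G) ^ 2)) := by
  rcases Nat.eq_zero_or_pos n with hn | hn
  · subst hn
    have h1 : somborSpecRad G = 0 := by
      rw [somborSpecRad]
      exact Real.iSup_of_isEmpty _
    have h2 : somborEnergy G = 0 := by
      rw [somborEnergy]; simp
    have h3 : forgottenIndex G = 0 := by
      rw [forgottenIndex]; simp
    rw [h1, h2, h3]
    norm_num
  · set f := somborEigs G with hf
    have hsum : ∑ i, f i = 0 := by
      have h := herm_trace_eq (somborMatrix_isHermitian G)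
      rw [sombor_trace] at h
      exact h.symm
    have hsq : ∑ i, f i ^ 2 = 2 * forgottenIndex G := by
      have h := herm_trace_sq_eq (somborMatrix_isHermitian G)
      rw [sombor_trace_sq] at h
      exact h.symm
    haveI : Nonempty (Fin n) := Fin.pos_iff_nonempty.mp hn
    obtain ⟨m, hm⟩ := Finite.exists_max f
    have hrho : somborSpecRad G = f m :=
      le_antisymm (ciSup_le hm) (le_ciSup (Set.Finite.bddAbove (Set.finite_range f)) m)
    have hsplit : ∑ i, f i = f m + ∑ i ∈ Finset.univ.erase m, f i :=
      (Finset.add_sum_erase _ f (Finset.mem_univ m)).symm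
    have hfm : f m = -∑ i ∈ Finset.univ.erase m, f i := by
      have := hsplit.symm.trans hsum
      linarith
    have hEsplit : somborEnergy G = |f m| + ∑ i ∈ Finset.univ.erase m, |f i| := by
      rw [somborEnergy]
      exact (Finset.add_sum_erase _ (fun i => |f i|) (Finset.mem_univ m)).symm
    have habs : -∑ i ∈ Finset.univ.erase m, f i ≤ ∑ i ∈ Finset.univ.erase m, |f i| := by
      rw [← Finset.sum_neg_distrib]
      exact Finset.sum_le_sum fun i _ => neg_le_abs _
    constructor
    · rw [hrho, hEsplit]
      have h1 : f m ≤ |f m| := le_abs_self _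
      have h2 : f m ≤ ∑ i ∈ Finset.univ.erase m, |f i| := hfm ▸ habs
      linarith
    · -- f m ≥ 0
      have hnn : 0 ≤ f m := by
        have h := Finset.sum_le_sum (s := Finset.univ) (f := f) (g := fun _ => f m)
          (fun i _ => hm i)
        rw [hsum] at h
        simp only [Finset.sum_const, Finset.card_univ, Fintype.card_fin, nsmul_eq_mul] at h
        have hn1 : (1:ℝ) ≤ (n:ℝ) := by exact_mod_cast hn
        nlinarith
      have hcard : ((Finset.univ.erase m).card : ℝ) = (n : ℝ) - 1 := by
        rw [Finset.card_erase_of_mem (Finset.mem_univ m)]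
        simp only [Finset.card_univ, Fintype.card_fin]
        rw [Nat.cast_sub hn]
        norm_num
      have hsqerase : ∑ i ∈ Finset.univ.erase m, f i ^ 2
          = 2 * forgottenIndex G - (somborSpecRad G) ^ 2 := by
        rw [hrho, ← hsq, Finset.sum_erase_eq_sub (Finset.mem_univ m)]
      have hnnsq : 0 ≤ 2 * forgottenIndex G - (somborSpecRad G) ^ 2 := by
        have : 0 ≤ ∑ i ∈ Finset.univ.erase m, f i ^ 2 :=
          Finset.sum_nonneg fun i _ => sq_nonneg _
        rw [hsqerase] at this
        exact this
      have hCS : ∑ i ∈ Finset.univ.erase m, |f i| ≤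
          Real.sqrt (((n : ℝ) - 1) * (2 * forgottenIndex G - (somborSpecRad G) ^ 2)) := by
        have hc := Finset.sum_mul_sq_le_sq_mul_sq (Finset.univ.erase m)
          (fun i => |f i|) (fun _ => (1:ℝ))
        simp only [mul_one, one_pow, sq_abs, Finset.sum_const, nsmul_eq_mul, mul_one] at hc
        rw [hsqerase] at hc
        have hnn2 : 0 ≤ ∑ i ∈ Finset.univ.erase m, |f i| :=
          Finset.sum_nonneg fun i _ => abs_nonneg _
        calc ∑ i ∈ Finset.univ.erase m, |f i|
            = Real.sqrt ((∑ i ∈ Finset.univ.erase m, |f i|) ^ 2) :=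
              (Real.sqrt_sq hnn2).symm
          _ ≤ Real.sqrt (((n : ℝ) - 1) * (2 * forgottenIndex G - (somborSpecRad G) ^ 2)) := by
              apply Real.sqrt_le_sqrt
              calc (∑ i ∈ Finset.univ.erase m, |f i|) ^ 2
                  ≤ (2 * forgottenIndex G - (somborSpecRad G) ^ 2) *
                    ((Finset.univ.erase m).card : ℝ) := hc
                _ = ((n : ℝ) - 1) * (2 * forgottenIndex G - (somborSpecRad G) ^ 2) := by
                    rw [hcard]; ring
      rw [hrho] at hCS
      rw [hEsplit, hrho, abs_of_nonneg hnn]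
      linarith
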